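/- Let ρ ≪ σ be finite-dimensional density matrices with ρ pure and [ρ,σ] ≠ 0. Then there exist no probability measures p ≪ q with (dp/dq)^{±1} ∈ L^∞(q) such that D_α(p,q) = D^min_α(ρ,σ) for all α in a nonempty open subinterval of (1,∞). -/

import Mathlib

open MeasureTheory Matrix
open scoped ENNReal ComplexOrder Topology

set_option linter.unusedSectionVars false
set_option maxHeartbeats 1000000

section NCSAux

lemma NCS_star_dot_self {n : Type*} [Fintype n] (φ : n → ℂ) :
    star φ ⬝ᵥ φ = ((∑ i, Complex.normSq (φ i) : ℝ) : ℂ) := by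
  simp only [dotProduct, Pi.star_apply, Complex.ofReal_sum]
  exact Finset.sum_congr rfl fun i _ => by
    rw [Complex.normSq_eq_conj_mul_self]; rfl

variable {n : Type*} [Fintype n] [DecidableEq n]

lemma NCS_cfc_isHermitian {A : Matrix n n ℂ} (hA : A.IsHermitian) (f : ℝ → ℝ) :
    (hA.cfc f).IsHermitian := by
  unfold Matrix.IsHermitian.cfc
  rw [Unitary.conjStarAlgAut_apply, Matrix.star_eq_conjTranspose]
  refine Matrix.isHermitian_mul_mul_conjTranspose _ ?_
  rw [Matrix.isHermitian_diagonal_iff]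
  intro i
  simp [_root_.IsSelfAdjoint, Complex.conj_ofReal]

lemma NCS_trace_cfc {A : Matrix n n ℂ} (hA : A.IsHermitian) (f : ℝ → ℝ) :
    (hA.cfc f).trace = ∑ i, (f (hA.eigenvalues i) : ℂ) := by
  unfold Matrix.IsHermitian.cfc
  rw [Unitary.conjStarAlgAut_apply, Matrix.trace_mul_cycle, Unitary.star_mul_self_of_mem (SetLike.coe_mem _), one_mul,
    Matrix.trace_diagonal]
  simp

lemma NCS_trace_eq_sum_eigenvalues {A : Matrix n n ℂ} (hA : A.IsHermitian) :
    A.trace = ∑ i, (hA.eigenvalues i : ℂ) := by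
  conv_lhs => rw [hA.spectral_theorem]
  rw [Unitary.conjStarAlgAut_apply, Matrix.trace_mul_cycle, Unitary.star_mul_self_of_mem (SetLike.coe_mem _), one_mul,
    Matrix.trace_diagonal]
  simp

lemma NCS_mul_vecMulVec (A : Matrix n n ℂ) (w v : n → ℂ) :
    A * Matrix.vecMulVec w v = Matrix.vecMulVec (A *ᵥ w) v := by
  ext i j
  simp only [Matrix.mul_apply, Matrix.vecMulVec_apply, Matrix.mulVec, dotProduct,
    Finset.sum_mul]
  exact Finset.sum_congr rfl fun k _ => by ring

lemma NCS_vecMulVec_mul (w v : n → ℂ) (A : Matrix n n ℂ) :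
    Matrix.vecMulVec w v * A = Matrix.vecMulVec w (v ᵥ* A) := by
  ext i j
  simp only [Matrix.mul_apply, Matrix.vecMulVec_apply, Matrix.vecMul, dotProduct,
    Finset.mul_sum]
  exact Finset.sum_congr rfl fun k _ => by ring

lemma NCS_vecMulVec_mulVec (w v x : n → ℂ) :
    Matrix.vecMulVec w v *ᵥ x = (v ⬝ᵥ x) • w := by
  ext i
  simp only [Matrix.mulVec, dotProduct, Matrix.vecMulVec_apply, Pi.smul_apply,
    smul_eq_mul, Finset.sum_mul]
  exact Finset.sum_congr rfl fun k _ => by ring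

lemma NCS_hermitian_conj_vecMulVec {A : Matrix n n ℂ} (hA : A.IsHermitian) (w : n → ℂ) :
    A * Matrix.vecMulVec w (star w) * A
      = Matrix.vecMulVec (A *ᵥ w) (star (A *ᵥ w)) := by
  rw [NCS_mul_vecMulVec, NCS_vecMulVec_mul, Matrix.star_mulVec, hA.eq]

lemma NCS_vecMulVec_sq (φ : n → ℂ) :
    Matrix.vecMulVec φ (star φ) * Matrix.vecMulVec φ (star φ)
      = ((∑ i, Complex.normSq (φ i) : ℝ) : ℂ) • Matrix.vecMulVec φ (star φ) := by
  rw [NCS_vecMulVec_mul]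
  have h1 : (star φ) ᵥ* Matrix.vecMulVec φ (star φ) = (star φ ⬝ᵥ φ) • star φ := by
    ext j
    simp only [Matrix.vecMul, dotProduct, Matrix.vecMulVec_apply, Pi.smul_apply,
      smul_eq_mul, Finset.sum_mul]
    exact Finset.sum_congr rfl fun k _ => by ring
  rw [h1, NCS_star_dot_self]
  ext i j
  simp only [Matrix.vecMulVec_apply, Matrix.smul_apply, Pi.smul_apply, smul_eq_mul]
  ring

lemma NCS_trace_vecMulVec (φ : n → ℂ) :
    (Matrix.vecMulVec φ (star φ)).trace = ((∑ i, Complex.normSq (φ i) : ℝ) : ℂ) := by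
  rw [← NCS_star_dot_self]
  simp only [Matrix.trace, Matrix.diag, Matrix.vecMulVec_apply, dotProduct, Pi.star_apply]
  exact Finset.sum_congr rfl fun i _ => mul_comm _ _

lemma NCS_eig_dichotomy {N : Matrix n n ℂ} (hN : N.IsHermitian) {t : ℝ}
    (h : N * N = (t : ℂ) • N) (i : n) :
    hN.eigenvalues i = 0 ∨ hN.eigenvalues i = t := by
  have hv := hN.mulVec_eigenvectorBasis i
  set v : n → ℂ := ⇑(hN.eigenvectorBasis i) with hvdef
  have hnz : v ≠ 0 := by
    intro h0
    exact hN.eigenvectorBasis.orthonormal.ne_zero i (by ext j; exact congrFun h0 j)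
  have hv' : N *ᵥ v = ((hN.eigenvalues i : ℂ)) • v := by
    rw [hv]; ext j; simp [Complex.real_smul]
  have h2 : ((hN.eigenvalues i : ℂ) * (hN.eigenvalues i : ℂ)) • v
      = ((t : ℂ) * (hN.eigenvalues i : ℂ)) • v := by
    have e1 : (N * N) *ᵥ v = ((hN.eigenvalues i : ℂ) * (hN.eigenvalues i : ℂ)) • v := by
      rw [← Matrix.mulVec_mulVec, hv', Matrix.mulVec_smul, hv', smul_smul]
    have e2 : ((t : ℂ) • N) *ᵥ v = ((t : ℂ) * (hN.eigenvalues i : ℂ)) • v := by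
      rw [Matrix.smul_mulVec, hv', smul_smul]
    rw [← e1, ← e2, h]
  have h3 : (hN.eigenvalues i : ℂ) * (hN.eigenvalues i : ℂ)
      = (t : ℂ) * (hN.eigenvalues i : ℂ) := by
    by_contra hne
    have hsub := sub_eq_zero.mpr h2
    rw [← sub_smul] at hsub
    rcases smul_eq_zero.mp hsub with h' | h'
    · exact hne (sub_eq_zero.mp h')
    · exact hnz h'
  have h4 : hN.eigenvalues i * hN.eigenvalues i = t * hN.eigenvalues i := by
    exact_mod_cast h3
  rcases mul_eq_zero.mp (by linarith : (hN.eigenvalues i - t) * hN.eigenvalues i = 0)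
    with h5 | h5
  · right; linarith [sub_eq_zero.mp h5]
  · left; exact h5

lemma NCS_unitary_normSq_sum (U : Matrix.unitaryGroup n ℂ) (x : n → ℂ) :
    ∑ i, Complex.normSq (((U : Matrix n n ℂ) *ᵥ x) i) = ∑ i, Complex.normSq (x i) := by
  have h1 : star ((U : Matrix n n ℂ) *ᵥ x) ⬝ᵥ ((U : Matrix n n ℂ) *ᵥ x) = star x ⬝ᵥ x := by
    rw [Matrix.star_mulVec, dotProduct_mulVec, Matrix.vecMul_vecMul,
      ← Matrix.star_eq_conjTranspose, Unitary.star_mul_self_of_mem (SetLike.coe_mem _),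
      Matrix.vecMul_one]
  have h2 := NCS_star_dot_self ((U : Matrix n n ℂ) *ᵥ x)
  have h3 := NCS_star_dot_self x
  rw [h2, h3] at h1
  exact_mod_cast h1

lemma NCS_analyticAt_real_log {x : ℝ} (hx : 0 < x) : AnalyticAt ℝ Real.log x := by
  have h2 : AnalyticAt ℝ (Complex.log) (Complex.ofRealCLM x) :=
    (analyticAt_clog (by rw [Complex.mem_slitPlane_iff]; simp [hx])).restrictScalars
  have h1 : AnalyticAt ℝ (fun y : ℝ => Complex.reCLM (Complex.log (Complex.ofRealCLM y))) x :=
    (Complex.reCLM.analyticAt _).comp (h2.comp (Complex.ofRealCLM.analyticAt x))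
  refine h1.congr ?_
  filter_upwards [eventually_gt_nhds hx] with y hy
  simp only [Complex.ofRealCLM_apply, Complex.reCLM_apply, Complex.log_ofReal_re]

lemma NCS_tendsto_aux (K δ : ℝ) (hδ : 0 < δ) (nn : ℕ) :
    Filter.Tendsto (fun α : ℝ => K * α * Real.exp (-δ / α) / α ^ nn)
      (𝓝[>] (0:ℝ)) (𝓝 0) := by
  have hyy : Filter.Tendsto (fun y : ℝ => y ^ nn * Real.exp (-(δ * y))) Filter.atTop (𝓝 0) := by
    have h2 : Filter.Tendsto (fun y : ℝ => δ * y) Filter.atTop Filter.atTop :=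
      Filter.Tendsto.const_mul_atTop hδ Filter.tendsto_id
    have h3 := (Real.tendsto_pow_mul_exp_neg_atTop_nhds_zero nn).comp h2
    have h4 : Filter.Tendsto (fun y : ℝ => (δ * y) ^ nn * Real.exp (-(δ * y)))
        Filter.atTop (𝓝 0) := h3
    have h5 := h4.const_mul ((δ ^ nn)⁻¹)
    rw [mul_zero] at h5
    refine h5.congr' ?_
    filter_upwards [Filter.eventually_ge_atTop (0:ℝ)] with y _
    rw [mul_pow]
    have hd : (δ:ℝ) ^ nn ≠ 0 := pow_ne_zero _ (ne_of_gt hδ)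
    field_simp
  have hinv : Filter.Tendsto (fun α : ℝ => α⁻¹) (𝓝[>] (0:ℝ)) Filter.atTop :=
    tendsto_inv_nhdsGT_zero
  have hcomp := hyy.comp hinv
  have hid : Filter.Tendsto (fun α : ℝ => α) (𝓝[>] (0:ℝ)) (𝓝 0) :=
    Filter.Tendsto.mono_left Filter.tendsto_id nhdsWithin_le_nhds
  have hmul := ((tendsto_const_nhds (x := K)).mul hcomp).mul hid
  simp only [mul_zero] at hmul
  refine hmul.congr' ?_
  filter_upwards [self_mem_nhdsWithin] with α (hα : (0:ℝ) < α)
  have hαne : α ≠ 0 := ne_of_gt hα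
  have hpow : α ^ nn ≠ 0 := pow_ne_zero _ hαne
  show K * ((α⁻¹) ^ nn * Real.exp (-(δ * α⁻¹))) * α = K * α * Real.exp (-δ / α) / α ^ nn
  rw [neg_div, div_eq_mul_inv δ α, inv_pow]
  field_simp

end NCSAux

/-- **No classical simulation of the sandwiched Rényi divergence for non-commuting
pure-state dichotomies.** Let `ρ = |ψ⟩⟨ψ| ≪ σ` be finite-dimensional density matrices
with `ρ` pure and `[ρ,σ] ≠ 0`. Then there are no probability measures `p ≪ q` whose
likelihood ratio and its pseudo-inverse are essentially bounded, such that the classical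
Rényi divergence `D_α(p,q)` equals the sandwiched divergence
`D^min_α(ρ,σ) = (α-1)⁻¹ log tr[(σ^{(1-α)/(2α)} ρ σ^{(1-α)/(2α)})^α]` for all `α` in a
nonempty open subinterval of `(1,∞)`. -/
theorem no_classical_simulation_pure_noncommuting {d : ℕ}
    (ψ : Fin d → ℂ) (hψn : star ψ ⬝ᵥ ψ = 1)
    (ρ : Matrix (Fin d) (Fin d) ℂ) (hρ : ρ = Matrix.vecMulVec ψ (star ψ))
    (σ : Matrix (Fin d) (Fin d) ℂ) (hσ : σ.PosSemidef) (hσtr : σ.trace = 1)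
    (hac : ∀ w : Fin d → ℂ, σ.mulVec w = 0 → ρ.mulVec w = 0)
    (hcomm : ρ * σ ≠ σ * ρ)
    (M : ℝ → Matrix (Fin d) (Fin d) ℂ)
    (hMdef : ∀ α : ℝ, M α
      = hσ.1.cfc (fun x : ℝ => x ^ ((1 - α) / (2 * α))) * ρ
          * hσ.1.cfc (fun x : ℝ => x ^ ((1 - α) / (2 * α))))
    (hM : ∀ α : ℝ, (M α).IsHermitian) :
    ¬ ∃ (Y : Type) (_ : MeasurableSpace Y) (p q : Measure Y),
        IsProbabilityMeasure p ∧ IsProbabilityMeasure q ∧ p ≪ q ∧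
        (∃ C : ℝ, ∀ᵐ x ∂q, (p.rnDeriv q x).toReal ≤ C) ∧
        (∃ c : ℝ, ∀ᵐ x ∂q, ((p.rnDeriv q x).toReal)⁻¹ ≤ c) ∧
        ∃ a b : ℝ, 1 ≤ a ∧ a < b ∧ ∀ α ∈ Set.Ioo a b,
          (α - 1)⁻¹ * Real.log (∫⁻ x, p.rnDeriv q x ^ α ∂q).toReal
            = (α - 1)⁻¹ * Real.log (((hM α).cfc (fun x : ℝ => x ^ α)).trace.re) := by
  classical
  rintro ⟨Y, mY, p, q, hp, hq, hpq, ⟨C, hC⟩, ⟨c, hc⟩, a, b, ha1, hab, heq⟩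
  -- ## Quantum setup
  set s : Fin d → ℝ := hσ.1.eigenvalues with hsdef
  set Umat : Matrix (Fin d) (Fin d) ℂ := (hσ.1.eigenvectorUnitary : Matrix (Fin d) (Fin d) ℂ)
    with hUdef
  set v : Fin d → ℂ := (star Umat) *ᵥ ψ with hvdef
  set w : Fin d → ℝ := fun i => Complex.normSq (v i) with hwdef
  have hψ0 : ψ ≠ 0 := by
    intro h0
    rw [h0] at hψn
    simp at hψn
  have hsnn : ∀ i, 0 ≤ s i := fun i => hσ.eigenvalues_nonneg i
  have hUU1 : star Umat * Umat = 1 := Unitary.star_mul_self_of_mem (SetLike.coe_mem _)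
  have hUU2 : Umat * star Umat = 1 := Unitary.mul_star_self_of_mem (SetLike.coe_mem _)
  have hψv : Umat *ᵥ v = ψ := by
    rw [hvdef, Matrix.mulVec_mulVec, hUU2, Matrix.one_mulVec]
  have hσU : σ * Umat = Umat * Matrix.diagonal (RCLike.ofReal ∘ s) := by
    conv_lhs => rw [hσ.1.spectral_theorem, Unitary.conjStarAlgAut_apply]
    rw [show (Matrix.IsHermitian.eigenvectorUnitary hσ.1 : Matrix (Fin d) (Fin d) ℂ) = Umat
      from rfl, mul_assoc, hUU1, mul_one]
  have hcol : ∀ i, σ *ᵥ (fun x => Umat x i) = ((s i : ℝ) : ℂ) • (fun x => Umat x i) := by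
    intro i
    funext r
    have h1 : (σ *ᵥ (fun x => Umat x i)) r = (σ * Umat) r i := by
      simp [Matrix.mulVec, dotProduct, Matrix.mul_apply]
    rw [h1, hσU, Matrix.mul_diagonal]
    simp only [Pi.smul_apply, smul_eq_mul, Function.comp_apply]
    exact mul_comm _ _
  have hvdot : ∀ i, v i = star (star ψ ⬝ᵥ (fun x => Umat x i)) := by
    intro i
    show (star Umat *ᵥ ψ) i = _
    simp only [Matrix.mulVec, dotProduct, Matrix.star_apply, star_sum, star_mul',
      star_star, Pi.star_apply]
    exact Finset.sum_congr rfl fun x _ => mul_comm _ _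
  have hw0 : ∀ i, s i = 0 → w i = 0 := by
    intro i h0
    have hu : σ *ᵥ (fun x => Umat x i) = 0 := by
      rw [hcol i, h0]
      simp
    have hρu := hac _ hu
    rw [hρ, NCS_vecMulVec_mulVec] at hρu
    have hdot : star ψ ⬝ᵥ (fun x => Umat x i) = 0 := by
      rcases smul_eq_zero.mp hρu with h' | h'
      · exact h'
      · exact absurd h' hψ0
    have hvi : v i = 0 := by rw [hvdot i, hdot, star_zero]
    show Complex.normSq (v i) = 0
    simp [hvi]
  -- noncommuting gives two support points with distinct eigenvalues
  have hpair : ∃ i j, w i ≠ 0 ∧ w j ≠ 0 ∧ s i ≠ s j := by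
    by_contra hno
    push_neg at hno
    have hex0 : ∃ i, w i ≠ 0 := by
      by_contra hall
      push_neg at hall
      have hv0 : v = 0 := by
        funext i
        have := hall i
        rw [hwdef] at this
        simpa using Complex.normSq_eq_zero.mp this
      apply hψ0
      rw [← hψv, hv0, Matrix.mulVec_zero]
    obtain ⟨i₀, hi₀⟩ := hex0
    have hσψ : σ *ᵥ ψ = ((s i₀ : ℝ) : ℂ) • ψ := by
      conv_lhs => rw [← hψv, Matrix.mulVec_mulVec, hσU, ← Matrix.mulVec_mulVec]
      have hDv : Matrix.diagonal (RCLike.ofReal ∘ s) *ᵥ v = ((s i₀ : ℝ) : ℂ) • v := by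
        funext k
        rw [Matrix.mulVec_diagonal]
        by_cases hvk : v k = 0
        · simp [hvk]
        · have hwk : w k ≠ 0 := by
            show Complex.normSq (v k) ≠ 0
            simpa using Complex.normSq_eq_zero.not.mpr hvk
          have hks := hno k i₀ hwk hi₀
          simp only [Pi.smul_apply, smul_eq_mul, Function.comp_apply]
          rw [show (RCLike.ofReal (s k) : ℂ) = ((s k : ℝ) : ℂ) from rfl, hks]
      rw [hDv, Matrix.mulVec_smul, hψv]
    apply hcomm
    rw [hρ, NCS_vecMulVec_mul, NCS_mul_vecMulVec, hσψ]
    have hstar : star ψ ᵥ* σ = ((s i₀ : ℝ) : ℂ) • star ψ := by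
      have h1 : star (σ *ᵥ ψ) = star ψ ᵥ* σ := by
        rw [Matrix.star_mulVec, hσ.1.eq]
      rw [← h1, hσψ, star_smul]
      congr 1
      exact Complex.conj_ofReal _
    rw [hstar]
    ext i j
    simp only [Matrix.vecMulVec_apply, Pi.smul_apply, smul_eq_mul]
    ring
  -- support finset and extremal eigenvalues
  set supp : Finset (Fin d) := Finset.univ.filter (fun i => w i ≠ 0) with hsuppdef
  obtain ⟨iw, jw, hiw, hjw, hsij⟩ := hpair
  have hiws : iw ∈ supp := Finset.mem_filter.mpr ⟨Finset.mem_univ _, hiw⟩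
  have hjws : jw ∈ supp := Finset.mem_filter.mpr ⟨Finset.mem_univ _, hjw⟩
  have hsupp_ne : supp.Nonempty := ⟨iw, hiws⟩
  have hwpos : ∀ k ∈ supp, 0 < w k := by
    intro k hk
    have hk2 := (Finset.mem_filter.mp hk).2
    exact lt_of_le_of_ne (Complex.normSq_nonneg _) (Ne.symm hk2)
  have hspos : ∀ k ∈ supp, 0 < s k := by
    intro k hk
    rcases lt_or_eq_of_le (hsnn k) with h | h
    · exact h
    · exact absurd (hw0 k h.symm) (Finset.mem_filter.mp hk).2
  obtain ⟨imax, himax, hmax⟩ := supp.exists_max_image s hsupp_ne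
  set sstar : ℝ := s imax with hsstardef
  have hsstar_pos : 0 < sstar := hspos imax himax
  have hoff_ex : ∃ k ∈ supp, ¬ s k = sstar := by
    by_cases hh1 : s iw = sstar
    · exact ⟨jw, hjws, by rw [← hh1]; exact fun h => hsij h.symm⟩
    · exact ⟨iw, hiws, hh1⟩
  set supmax : Finset (Fin d) := supp.filter (fun k => s k = sstar) with hsupmaxdef
  set offsupp : Finset (Fin d) := supp.filter (fun k => ¬ s k = sstar) with hoffdef
  have hoff_ne : offsupp.Nonempty := by
    obtain ⟨k, hk1, hk2⟩ := hoff_ex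
    exact ⟨k, Finset.mem_filter.mpr ⟨hk1, hk2⟩⟩
  set wstar : ℝ := ∑ k ∈ supmax, w k with hwstardef
  have hwstar_pos : 0 < wstar := by
    rw [hwstardef]
    apply Finset.sum_pos
    · intro k hk
      exact hwpos k (Finset.mem_filter.mp hk).1
    · exact ⟨imax, Finset.mem_filter.mpr ⟨himax, rfl⟩⟩
  set Wtot : ℝ := ∑ k ∈ offsupp, w k with hWtotdef
  have hWtot_nn : 0 ≤ Wtot :=
    Finset.sum_nonneg fun k _ => Complex.normSq_nonneg _
  obtain ⟨kmin, hkmin, hkm⟩ := offsupp.exists_min_image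
    (fun k => Real.log sstar - Real.log (s k)) hoff_ne
  set δ : ℝ := Real.log sstar - Real.log (s kmin) with hδdef
  have hkmin_supp : kmin ∈ supp := (Finset.mem_filter.mp hkmin).1
  have hδpos : 0 < δ := by
    have hlt : s kmin < sstar := by
      have hle := hmax kmin hkmin_supp
      have hne : ¬ s kmin = sstar := (Finset.mem_filter.mp hkmin).2
      exact lt_of_le_of_ne hle hne
    have := Real.log_lt_log (hspos kmin hkmin_supp) hlt
    rw [hδdef]; linarith
  have hδle : ∀ k ∈ offsupp, Real.log (s k) - Real.log sstar ≤ -δ := by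
    intro k hk
    have := hkm k hk
    rw [hδdef]; linarith
  -- the analytic quantum function
  set hh : ℝ → ℝ := fun α => ∑ k ∈ supp, w k * Real.exp (Real.log (s k) * ((1 - α) / α))
    with hhdef
  set E : ℝ → ℝ := fun α =>
    ∑ k ∈ offsupp, w k * Real.exp ((Real.log (s k) - Real.log sstar) * ((1 - α) / α))
    with hEdef
  have hhpos : ∀ α, 0 < hh α := by
    intro α
    apply Finset.sum_pos (fun k hk => mul_pos (hwpos k hk) (Real.exp_pos _)) hsupp_ne
  have hEpos : ∀ α, 0 < E α := by
    intro α
    apply Finset.sum_pos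
    · intro k hk
      exact mul_pos (hwpos k ((Finset.mem_filter.mp hk).1)) (Real.exp_pos _)
    · exact hoff_ne
  have hsplit : ∀ α : ℝ, hh α
      = Real.exp (Real.log sstar * ((1 - α) / α)) * (wstar + E α) := by
    intro α
    rw [mul_add]
    have h1 : Real.exp (Real.log sstar * ((1 - α) / α)) * wstar
        = ∑ k ∈ supmax, w k * Real.exp (Real.log (s k) * ((1 - α) / α)) := by
      rw [hwstardef, Finset.mul_sum]
      apply Finset.sum_congr rfl
      intro k hk
      have : s k = sstar := (Finset.mem_filter.mp hk).2
      rw [this]; ring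
    have h2 : Real.exp (Real.log sstar * ((1 - α) / α)) * E α
        = ∑ k ∈ offsupp, w k * Real.exp (Real.log (s k) * ((1 - α) / α)) := by
      rw [hEdef, Finset.mul_sum]
      apply Finset.sum_congr rfl
      intro k hk
      rw [← mul_assoc, mul_comm (Real.exp _) (w k), mul_assoc, ← Real.exp_add]
      ring_nf
    have hsum : hh α = (∑ k ∈ supmax, w k * Real.exp (Real.log (s k) * ((1 - α) / α)))
        + ∑ k ∈ offsupp, w k * Real.exp (Real.log (s k) * ((1 - α) / α)) :=
      (Finset.sum_filter_add_sum_filter_not supp (fun k => s k = sstar) _).symm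
    rw [hsum, h1, h2]
  -- ## quantum trace evaluation
  have hQtrace : ∀ α : ℝ, 1 < α →
      (((hM α).cfc (fun x : ℝ => x ^ α)).trace).re = Real.exp (Real.log (hh α) * α) := by
    intro α hα
    have hα0 : (0:ℝ) < α := lt_trans one_pos hα
    have hαne : α ≠ 0 := ne_of_gt hα0
    have hAH : (hσ.1.cfc (fun x : ℝ => x ^ ((1 - α) / (2 * α)))).IsHermitian :=
      NCS_cfc_isHermitian hσ.1 _
    set φ : Fin d → ℂ := (hσ.1.cfc (fun x : ℝ => x ^ ((1 - α) / (2 * α)))) *ᵥ ψ with hφdef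
    have hMeq : M α = Matrix.vecMulVec φ (star φ) := by
      rw [hMdef α, hρ]
      exact NCS_hermitian_conj_vecMulVec hAH ψ
    set T : ℝ := ∑ i, Complex.normSq (φ i) with hTdef
    have hφ2 : φ = Umat *ᵥ ((Matrix.diagonal
        (RCLike.ofReal ∘ (fun x : ℝ => x ^ ((1 - α) / (2 * α))) ∘ s)) *ᵥ v) := by
      rw [hφdef, hvdef, Matrix.mulVec_mulVec, Matrix.mulVec_mulVec]
      rfl
    have hT1 : T = ∑ i, (s i ^ ((1 - α) / (2 * α))) ^ 2 * w i := by
      rw [hTdef, hφ2, hUdef, NCS_unitary_normSq_sum]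
      apply Finset.sum_congr rfl
      intro i _
      rw [Matrix.mulVec_diagonal]
      rw [show ((RCLike.ofReal ∘ (fun x : ℝ => x ^ ((1 - α) / (2 * α))) ∘ s) i : ℂ)
        = Complex.ofReal ((s i) ^ ((1 - α) / (2 * α))) from rfl]
      rw [Complex.normSq_mul, Complex.normSq_ofReal, sq]
    have hT2 : T = hh α := by
      have hvan : ∀ x ∈ Finset.univ, x ∉ supp →
          (s x ^ ((1 - α) / (2 * α))) ^ 2 * w x = 0 := by
        intro x _ hx
        have hwx : w x = 0 := by
          by_contra hne
          exact hx (Finset.mem_filter.mpr ⟨Finset.mem_univ _, hne⟩)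
        rw [hwx, mul_zero]
      rw [hT1, ← Finset.sum_subset (Finset.subset_univ supp) hvan]
      simp only [hhdef]
      apply Finset.sum_congr rfl
      intro k hk
      have hsk := hspos k hk
      rw [Real.rpow_def_of_pos hsk, sq, ← Real.exp_add, mul_comm]
      congr 1
      field_simp
      ring
    have hTpos : 0 < T := by rw [hT2]; exact hhpos α
    have hsq : M α * M α = ((T : ℝ) : ℂ) • M α := by
      rw [hMeq]; exact NCS_vecMulVec_sq φ
    have heig : ∀ i, (hM α).eigenvalues i = 0 ∨ (hM α).eigenvalues i = T :=
      fun i => NCS_eig_dichotomy (hM α) hsq i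
    rw [NCS_trace_cfc (hM α)]
    rw [← Complex.ofReal_sum, Complex.ofReal_re]
    have hsum : ∑ i, ((hM α).eigenvalues i ^ α)
        = T ^ (α - 1) * ∑ i, (hM α).eigenvalues i := by
      rw [Finset.mul_sum]
      apply Finset.sum_congr rfl
      intro i _
      rcases heig i with h | h
      · rw [h, Real.zero_rpow hαne, mul_zero]
      · rw [h, ← Real.rpow_add_one (ne_of_gt hTpos) (α - 1)]
        congr 1
        ring
    have htr : ∑ i, (hM α).eigenvalues i = T := by
      have h1 := NCS_trace_eq_sum_eigenvalues (hM α)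
      have h2 : ((T : ℝ) : ℂ) = ∑ i, ((hM α).eigenvalues i : ℂ) := by
        rw [← h1, hMeq, NCS_trace_vecMulVec]
      exact_mod_cast h2.symm
    rw [hsum, htr, hT2]
    rw [Real.rpow_def_of_pos (hhpos α)]
    have hexp := Real.exp_add (Real.log (hh α) * (α - 1)) (Real.log (hh α))
    rw [Real.exp_log (hhpos α)] at hexp
    rw [← hexp]
    congr 1
    ring
  -- ## classical setup
  set F : Y → ℝ := fun x => (p.rnDeriv q x).toReal with hFdef
  have hFmeas : Measurable F := (Measure.measurable_rnDeriv p q).ennreal_toReal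
  have hFnn : ∀ x, 0 ≤ F x := fun x => ENNReal.toReal_nonneg
  have hnonzero : q {x | F x ≠ 0} ≠ 0 := by
    intro h0
    have hcongr : F =ᵐ[q] (fun _ => (0:ℝ)) := by
      rw [Filter.EventuallyEq, MeasureTheory.ae_iff]
      simpa using h0
    have hint : ∫ x, F x ∂q = 1 := by
      rw [hFdef, Measure.integral_toReal_rnDeriv hpq]
      simp
    rw [integral_congr_ae hcongr, integral_const] at hint
    simp at hint
  have hex_wit : ∃ x, F x ≠ 0 ∧ F x ≤ C ∧ (F x)⁻¹ ≤ c := by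
    have hfr : ∃ᵐ x ∂q, F x ≠ 0 := MeasureTheory.frequently_ae_iff.mpr hnonzero
    obtain ⟨x, hx1, hx2, hx3⟩ := (hfr.and_eventually (hC.and hc)).exists
    exact ⟨x, hx1, hx2, hx3⟩
  obtain ⟨x₀, hx₀ne, hx₀C, hx₀c⟩ := hex_wit
  have hcpos : 0 < c :=
    lt_of_lt_of_le (inv_pos.mpr (lt_of_le_of_ne (hFnn x₀) (Ne.symm hx₀ne))) hx₀c
  set L : ℝ := max |Real.log C| |Real.log c⁻¹| with hLdef
  have hLnn : 0 ≤ L := le_trans (abs_nonneg _) (le_max_left _ _)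
  have hFbound : ∀ᵐ x ∂q, F x ≠ 0 → (c⁻¹ ≤ F x ∧ F x ≤ C) := by
    filter_upwards [hC, hc] with x h1 h2 h3
    have hFx : 0 < F x := lt_of_le_of_ne (hFnn x) (Ne.symm h3)
    refine ⟨?_, h1⟩
    have h4 : c⁻¹ ≤ ((F x)⁻¹)⁻¹ := by
      apply inv_anti₀ (inv_pos.mpr hFx) h2
    rwa [inv_inv] at h4
  have hlogbound : ∀ᵐ x ∂q, F x ≠ 0 → |Real.log (F x)| ≤ L := by
    filter_upwards [hFbound] with x hx hne
    obtain ⟨h1, h2⟩ := hx hne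
    have hcinv : (0:ℝ) < c⁻¹ := inv_pos.mpr hcpos
    have hFx : 0 < F x := lt_of_lt_of_le hcinv h1
    rw [abs_le]
    constructor
    · have h5 := Real.log_le_log hcinv h1
      have h6 : -L ≤ Real.log c⁻¹ :=
        le_trans (neg_le_neg (le_max_right |Real.log C| _)) (neg_abs_le _)
      linarith
    · have h6 := Real.log_le_log hFx h2
      have h7 : Real.log C ≤ L := le_trans (le_abs_self _) (le_max_left _ _)
      linarith
  set G : ℝ → Y → ℝ := fun α x => if F x = 0 then 0 else Real.exp (Real.log (F x) * α)
    with hGdef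
  set W : ℂ → ℂ := fun z =>
    ∫ x, (if F x = 0 then (0:ℂ) else Complex.exp ((Real.log (F x) : ℂ) * z)) ∂q with hWdef
  have hmeasC : ∀ z : ℂ, AEStronglyMeasurable
      (fun x => if F x = 0 then (0:ℂ) else Complex.exp ((Real.log (F x) : ℂ) * z)) q := by
    intro z
    apply Measurable.aestronglyMeasurable
    exact Measurable.ite (hFmeas (measurableSet_singleton 0)) measurable_const
      (Complex.measurable_exp.comp
        ((Complex.measurable_ofReal.comp (Real.measurable_log.comp hFmeas)).mul_const z))
  have hmeasG : ∀ α : ℝ, AEStronglyMeasurable (G α) q := by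
    intro α
    apply Measurable.aestronglyMeasurable
    exact Measurable.ite (hFmeas (measurableSet_singleton 0)) measurable_const
      (Real.measurable_exp.comp ((Real.measurable_log.comp hFmeas).mul_const α))
  have hCbound : ∀ (z : ℂ) (R : ℝ), ‖z‖ ≤ R → ∀ᵐ x ∂q,
      ‖if F x = 0 then (0:ℂ) else Complex.exp ((Real.log (F x) : ℂ) * z)‖
        ≤ Real.exp (L * R) := by
    intro z R hzR
    filter_upwards [hlogbound] with x hx
    by_cases h0 : F x = 0
    · rw [if_pos h0, norm_zero]
      positivity
    · rw [if_neg h0, Complex.norm_exp]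
      apply Real.exp_le_exp.mpr
      have hre : ((Real.log (F x) : ℂ) * z).re = Real.log (F x) * z.re := by
        simp [Complex.mul_re]
      rw [hre]
      calc Real.log (F x) * z.re ≤ |Real.log (F x) * z.re| := le_abs_self _
        _ = |Real.log (F x)| * |z.re| := abs_mul _ _
        _ ≤ L * R := by
            apply mul_le_mul (hx h0) (le_trans (Complex.abs_re_le_norm z) hzR)
              (abs_nonneg _) hLnn
  have hintC : ∀ z : ℂ, Integrable
      (fun x => if F x = 0 then (0:ℂ) else Complex.exp ((Real.log (F x) : ℂ) * z)) q :=
    fun z => Integrable.mono' (integrable_const (Real.exp (L * ‖z‖))) (hmeasC z)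
      (hCbound z ‖z‖ le_rfl)
  have hWderiv : ∀ z₀ : ℂ, HasDerivAt W
      (∫ x, (if F x = 0 then (0:ℂ)
        else (Real.log (F x) : ℂ) * Complex.exp ((Real.log (F x) : ℂ) * z₀)) ∂q) z₀ := by
    intro z₀
    have hmeas' : AEStronglyMeasurable (fun x => if F x = 0 then (0:ℂ)
        else (Real.log (F x) : ℂ) * Complex.exp ((Real.log (F x) : ℂ) * z₀)) q := by
      apply Measurable.aestronglyMeasurable
      exact Measurable.ite (hFmeas (measurableSet_singleton 0)) measurable_const
        ((Complex.measurable_ofReal.comp (Real.measurable_log.comp hFmeas)).mul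
          (Complex.measurable_exp.comp
            ((Complex.measurable_ofReal.comp (Real.measurable_log.comp hFmeas)).mul_const z₀)))
    have key := hasDerivAt_integral_of_dominated_loc_of_deriv_le (𝕜 := ℂ) (μ := q)
      (F := fun z x => if F x = 0 then (0:ℂ) else Complex.exp ((Real.log (F x) : ℂ) * z))
      (F' := fun z x => if F x = 0 then (0:ℂ)
        else (Real.log (F x) : ℂ) * Complex.exp ((Real.log (F x) : ℂ) * z))
      (bound := fun _ => L * Real.exp (L * (‖z₀‖ + 1)))
      (Metric.ball_mem_nhds z₀ one_pos) (Filter.Eventually.of_forall fun z => hmeasC z) (hintC z₀) hmeas'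
      ?_ (integrable_const _) ?_
    · exact key.2
    · filter_upwards [hlogbound] with x hx z hz
      by_cases h0 : F x = 0
      · rw [if_pos h0, norm_zero]
        positivity
      · rw [if_neg h0, norm_mul]
        have h1 : ‖(Real.log (F x) : ℂ)‖ ≤ L := by
          rw [Complex.norm_real]
          exact hx h0
        have hz1 : ‖z‖ ≤ ‖z₀‖ + 1 := by
          have h2 := mem_ball_iff_norm.mp hz
          calc ‖z‖ = ‖z₀ + (z - z₀)‖ := by ring_nf
            _ ≤ ‖z₀‖ + ‖z - z₀‖ := norm_add_le _ _
            _ ≤ ‖z₀‖ + 1 := by linarith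
        have h2 : ‖Complex.exp ((Real.log (F x) : ℂ) * z)‖ ≤ Real.exp (L * (‖z₀‖ + 1)) := by
          rw [Complex.norm_exp]
          apply Real.exp_le_exp.mpr
          have hre : ((Real.log (F x) : ℂ) * z).re = Real.log (F x) * z.re := by
            simp [Complex.mul_re]
          rw [hre]
          calc Real.log (F x) * z.re ≤ |Real.log (F x) * z.re| := le_abs_self _
            _ = |Real.log (F x)| * |z.re| := abs_mul _ _
            _ ≤ L * (‖z₀‖ + 1) := by
                apply mul_le_mul (hx h0) (le_trans (Complex.abs_re_le_norm z) hz1)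
                  (abs_nonneg _) hLnn
        exact mul_le_mul h1 h2 (norm_nonneg _) hLnn
    · refine Filter.Eventually.of_forall fun x z hz => ?_
      by_cases h0 : F x = 0
      · simp only [if_pos h0]
        exact hasDerivAt_const _ _
      · simp only [if_neg h0]
        have h3 : HasDerivAt (fun z : ℂ => (Real.log (F x) : ℂ) * z)
            ((Real.log (F x) : ℂ)) z := by
          simpa using (hasDerivAt_id z).const_mul ((Real.log (F x) : ℂ))
        have h4 := h3.cexp
        simpa [mul_comm] using h4
  have hWan : ∀ z : ℂ, AnalyticAt ℂ W z :=
    fun z => Differentiable.analyticAt (fun z' => (hWderiv z').differentiableAt) z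
  set Zr : ℝ → ℝ := fun α => ∫ x, G α x ∂q with hZrdef
  have hWZ : ∀ α : ℝ, W (α : ℂ) = ((Zr α : ℝ) : ℂ) := by
    intro α
    have hstep : W (α : ℂ) = ∫ x, ((G α x : ℝ) : ℂ) ∂q := by
      simp only [hWdef, hGdef]
      apply integral_congr_ae
      apply Filter.Eventually.of_forall
      intro x
      by_cases h0 : F x = 0
      · simp [h0]
      · simp only [if_neg h0]
        rw [Complex.ofReal_exp, Complex.ofReal_mul]
    rw [hstep]
    exact integral_ofReal
  have hZan : ∀ α : ℝ, AnalyticAt ℝ Zr α := by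
    intro α
    have h1 : AnalyticAt ℝ (fun t : ℝ => Complex.reCLM (W (Complex.ofRealCLM t))) α :=
      (Complex.reCLM.analyticAt _).comp
        (((hWan _).restrictScalars).comp (Complex.ofRealCLM.analyticAt α))
    refine h1.congr ?_
    apply Filter.Eventually.of_forall
    intro t
    show (W (t : ℂ)).re = Zr t
    rw [hWZ t, Complex.ofReal_re]
  have hGbound : ∀ α : ℝ, ∀ᵐ x ∂q, ‖G α x‖ ≤ Real.exp (L * |α|) := by
    intro α
    filter_upwards [hlogbound] with x hx
    by_cases h0 : F x = 0
    · simp only [hGdef, if_pos h0, norm_zero]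
      positivity
    · simp only [hGdef, if_neg h0, Real.norm_eq_abs, Real.abs_exp]
      apply Real.exp_le_exp.mpr
      calc Real.log (F x) * α ≤ |Real.log (F x) * α| := le_abs_self _
        _ = |Real.log (F x)| * |α| := abs_mul _ _
        _ ≤ L * |α| := mul_le_mul_of_nonneg_right (hx h0) (abs_nonneg _)
  have hGint : ∀ α : ℝ, Integrable (G α) q := fun α =>
    Integrable.mono' (integrable_const (Real.exp (L * |α|))) (hmeasG α) (hGbound α)
  have hGnn : ∀ α x, 0 ≤ G α x := by
    intro α x
    by_cases h0 : F x = 0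
    · simp [hGdef, h0]
    · simp only [hGdef, if_neg h0]
      exact (Real.exp_pos _).le
  have hlin : ∀ α : ℝ, 0 < α → (∫⁻ x, p.rnDeriv q x ^ α ∂q).toReal = Zr α := by
    intro α hα0
    have hae : (fun x => p.rnDeriv q x ^ α) =ᵐ[q] (fun x => ENNReal.ofReal (G α x)) := by
      filter_upwards [Measure.rnDeriv_lt_top p q] with x hx
      by_cases h0 : F x = 0
      · have hzero : p.rnDeriv q x = 0 := by
          rcases ENNReal.toReal_eq_zero_iff _ |>.mp h0 with h | h
          · exact h
          · exact absurd h hx.ne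
        rw [hzero, ENNReal.zero_rpow_of_pos hα0]
        simp [hGdef, h0]
      · have hpos : 0 < F x := lt_of_le_of_ne (hFnn x) (Ne.symm h0)
        have hfin : p.rnDeriv q x ≠ ⊤ := hx.ne
        conv_lhs => rw [← ENNReal.ofReal_toReal hfin]
        rw [ENNReal.ofReal_rpow_of_pos hpos]
        congr 1
        simp only [hGdef, if_neg h0]
        exact Real.rpow_def_of_pos hpos α
    rw [lintegral_congr_ae hae, ← ofReal_integral_eq_lintegral_ofReal (hGint α)
      (Filter.Eventually.of_forall (hGnn α)), ENNReal.toReal_ofReal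
      (integral_nonneg (hGnn α))]
  have hZpos : ∀ α : ℝ, 0 < Zr α := by
    intro α
    set ε : ℝ := Real.exp (-(L * |α|)) with hεdef
    have hεpos : 0 < ε := Real.exp_pos _
    have hsetm : MeasurableSet {x | F x ≠ 0} :=
      (hFmeas (measurableSet_singleton 0)).compl
    have hind : Integrable ({x | F x ≠ 0}.indicator (fun _ => ε)) q :=
      (integrable_const ε).indicator hsetm
    have hle : {x | F x ≠ 0}.indicator (fun _ => ε) ≤ᵐ[q] G α := by
      filter_upwards [hlogbound] with x hx
      by_cases h0 : F x = 0
      · rw [Set.indicator_of_notMem (by simpa using h0)]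
        exact hGnn α x
      · rw [Set.indicator_of_mem (by simpa using h0)]
        simp only [hGdef, if_neg h0]
        apply Real.exp_le_exp.mpr
        have h1 := neg_abs_le (Real.log (F x) * α)
        rw [abs_mul] at h1
        have h2 : |Real.log (F x)| * |α| ≤ L * |α| :=
          mul_le_mul_of_nonneg_right (hx h0) (abs_nonneg _)
        linarith
    have h2 : ∫ x, ({x | F x ≠ 0}.indicator (fun _ => ε)) x ∂q ≤ Zr α :=
      integral_mono_ae hind (hGint α) hle
    rw [integral_indicator_const _ hsetm, measureReal_def] at h2
    have h3 : 0 < (q {x | F x ≠ 0}).toReal :=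
      ENNReal.toReal_pos hnonzero (measure_ne_top q _)
    have h4 : 0 < (q {x | F x ≠ 0}).toReal • ε := by
      rw [smul_eq_mul]
      positivity
    linarith
  have hab1 : 1 < b := lt_of_le_of_lt ha1 hab
  have hkey : ∀ α ∈ Set.Ioo a b, Zr α = Real.exp (Real.log (hh α) * α) := by
    intro α hα
    have hα1 : 1 < α := lt_of_le_of_lt ha1 hα.1
    have h1 := heq α hα
    rw [hlin α (lt_trans one_pos hα1), hQtrace α hα1] at h1
    have hne : ((α : ℝ) - 1)⁻¹ ≠ 0 := inv_ne_zero (by intro h; rw [sub_eq_zero] at h; linarith)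
    have h2 := mul_left_cancel₀ hne h1
    rw [Real.log_exp] at h2
    rw [← Real.exp_log (hZpos α), h2]
  set QQ : ℝ → ℝ := fun α => Real.exp (Real.log (hh α) * α) with hQQdef
  have hhan : ∀ α : ℝ, 0 < α → AnalyticAt ℝ hh α := by
    intro α hα0
    rw [hhdef]
    apply Finset.analyticAt_fun_sum
    intro k _
    apply AnalyticAt.mul analyticAt_const
    have hg : AnalyticAt ℝ (fun t : ℝ => Real.log (s k) * ((1 - t) / t)) α := by
      apply AnalyticAt.mul analyticAt_const
      exact AnalyticAt.div (analyticAt_const.sub analyticAt_id) analyticAt_id (ne_of_gt hα0)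
    exact analyticAt_rexp.comp hg
  have hQQan : ∀ α ∈ Set.Ioo (0:ℝ) b, AnalyticAt ℝ QQ α := by
    intro α hα
    rw [hQQdef]
    apply AnalyticAt.comp analyticAt_rexp
    apply AnalyticAt.mul
    · exact (NCS_analyticAt_real_log (hhpos α)).comp (hhan α hα.1)
    · exact analyticAt_id
  have hEqOn : Set.EqOn Zr QQ (Set.Ioo (0:ℝ) b) := by
    have hmid : (a + b)/2 ∈ Set.Ioo a b := ⟨by linarith, by linarith⟩
    have hmid' : (a + b)/2 ∈ Set.Ioo (0:ℝ) b := ⟨by linarith, by linarith⟩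
    apply AnalyticOnNhd.eqOn_of_preconnected_of_eventuallyEq (𝕜 := ℝ)
      (fun x _ => hZan x) (fun x hx => hQQan x hx) isPreconnected_Ioo hmid'
    filter_upwards [isOpen_Ioo.mem_nhds hmid] with t ht
    exact hkey t ht
  -- ## endgame
  set B : ℝ → ℝ := fun α => Real.exp (Real.log sstar * (1 - α) + Real.log wstar * α)
    with hBdef
  set χ : ℝ → ℝ := fun α => Zr α - B α with hχdef
  have hχan : AnalyticAt ℝ χ 0 := by
    rw [hχdef]
    apply AnalyticAt.sub (hZan 0)
    rw [hBdef]
    apply AnalyticAt.comp analyticAt_rexp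
    apply AnalyticAt.add
    · exact analyticAt_const.mul (analyticAt_const.sub analyticAt_id)
    · exact analyticAt_const.mul analyticAt_id
  set K : ℝ := Real.exp |Real.log sstar| * Real.exp |Real.log wstar|
    * Wtot * Real.exp δ with hKdef
  have hbound : ∀ α ∈ Set.Ioo (0:ℝ) 1, 0 < χ α ∧ χ α ≤ K * α * Real.exp (-δ/α) := by
    intro α hα
    have hα0 : 0 < α := hα.1
    have hα1 : α < 1 := hα.2
    have hαne : α ≠ 0 := ne_of_gt hα0
    have hαb : α ∈ Set.Ioo (0:ℝ) b := ⟨hα0, lt_trans hα1 hab1⟩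
    have hwE : 0 < wstar + E α := add_pos hwstar_pos (hEpos α)
    -- the factorization of χ on (0,1)
    have hZQ : Zr α = Real.exp (Real.log sstar * (1 - α))
        * Real.exp (Real.log (wstar + E α) * α) := by
      rw [hEqOn hαb]
      simp only [hQQdef]
      have hlog : Real.log (hh α) = Real.log sstar * ((1 - α) / α)
          + Real.log (wstar + E α) := by
        rw [hsplit α, Real.log_mul (Real.exp_ne_zero _) (ne_of_gt hwE), Real.log_exp]
      rw [hlog, add_mul, Real.exp_add]
      congr 2
      field_simp
    have hBeq : B α = Real.exp (Real.log sstar * (1 - α))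
        * Real.exp (Real.log wstar * α) := by
      simp only [hBdef]
      rw [Real.exp_add]
    have hχeq : χ α = Real.exp (Real.log sstar * (1 - α))
        * (Real.exp (Real.log (wstar + E α) * α) - Real.exp (Real.log wstar * α)) := by
      rw [hχdef]
      show Zr α - B α = _
      rw [hZQ, hBeq]
      ring
    have hRpos : 0 < Real.exp (Real.log (wstar + E α) * α) - Real.exp (Real.log wstar * α) := by
      rw [sub_pos]
      apply Real.exp_lt_exp.mpr
      apply mul_lt_mul_of_pos_right _ hα0
      exact Real.log_lt_log hwstar_pos (by linarith [hEpos α])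
    have hχpos : 0 < χ α := by
      rw [hχeq]
      exact mul_pos (Real.exp_pos _) hRpos
    refine ⟨hχpos, ?_⟩
    -- MVT bound on the rpow difference
    have hxy : wstar < wstar + E α := by linarith [hEpos α]
    have hRrpow : Real.exp (Real.log (wstar + E α) * α) - Real.exp (Real.log wstar * α)
        = (wstar + E α) ^ α - wstar ^ α := by
      rw [Real.rpow_def_of_pos hwE, Real.rpow_def_of_pos hwstar_pos]
    have hmvt : ∃ ξ ∈ Set.Ioo wstar (wstar + E α),
        α * ξ ^ (α - 1) = ((wstar + E α) ^ α - wstar ^ α) / ((wstar + E α) - wstar) := by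
      apply exists_hasDerivAt_eq_slope (fun t => t ^ α) (fun t => α * t ^ (α - 1)) hxy
      · intro t ht
        exact (Real.continuousAt_rpow_const t α
          (Or.inl (ne_of_gt (lt_of_lt_of_le hwstar_pos ht.1)))).continuousWithinAt
      · intro t ht
        have := Real.hasDerivAt_rpow_const (x := t) (p := α)
          (Or.inl (ne_of_gt (lt_trans hwstar_pos ht.1)))
        simpa [mul_comm] using this
    obtain ⟨ξ, hξ, hslope⟩ := hmvt
    have hξpos : 0 < ξ := lt_trans hwstar_pos hξ.1
    have hdiff : (wstar + E α) ^ α - wstar ^ α = α * ξ ^ (α - 1) * E α := by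
      have h1 : (wstar + E α) - wstar = E α := by ring
      rw [h1] at hslope
      rw [hslope, div_mul_cancel₀ _ (ne_of_gt (hEpos α))]
    -- bound ξ ^ (α - 1) ≤ exp |log wstar|
    have hξbound : ξ ^ (α - 1) ≤ Real.exp |Real.log wstar| := by
      rw [Real.rpow_def_of_pos hξpos]
      apply Real.exp_le_exp.mpr
      have h1 : Real.log wstar ≤ Real.log ξ := Real.log_le_log hwstar_pos (le_of_lt hξ.1)
      have h2 : α - 1 < 0 := by linarith
      calc Real.log ξ * (α - 1) ≤ Real.log wstar * (α - 1) := by nlinarith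
        _ ≤ |Real.log wstar * (α - 1)| := le_abs_self _
        _ = |Real.log wstar| * |α - 1| := abs_mul _ _
        _ ≤ |Real.log wstar| * 1 := by
            apply mul_le_mul_of_nonneg_left _ (abs_nonneg _)
            rw [abs_le]
            constructor <;> linarith
        _ = |Real.log wstar| := mul_one _
    -- bound E α
    have hEbound : E α ≤ Wtot * (Real.exp δ * Real.exp (-δ/α)) := by
      have h1 : ∀ k ∈ offsupp,
          w k * Real.exp ((Real.log (s k) - Real.log sstar) * ((1 - α) / α))
            ≤ w k * (Real.exp δ * Real.exp (-δ/α)) := by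
        intro k hk
        apply mul_le_mul_of_nonneg_left _ (Complex.normSq_nonneg _)
        rw [← Real.exp_add]
        apply Real.exp_le_exp.mpr
        have h2 := hδle k hk
        have h3 : 0 ≤ (1 - α) / α := by
          apply div_nonneg _ (le_of_lt hα0)
          linarith
        calc (Real.log (s k) - Real.log sstar) * ((1 - α) / α)
            ≤ (-δ) * ((1 - α) / α) := mul_le_mul_of_nonneg_right h2 h3
          _ = δ + -δ/α := by field_simp; ring
      calc E α ≤ ∑ k ∈ offsupp, w k * (Real.exp δ * Real.exp (-δ/α)) :=
            Finset.sum_le_sum h1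
        _ = Wtot * (Real.exp δ * Real.exp (-δ/α)) := by
            rw [hWtotdef, Finset.sum_mul]
    -- bound the prefactor
    have hPbound : Real.exp (Real.log sstar * (1 - α)) ≤ Real.exp |Real.log sstar| := by
      apply Real.exp_le_exp.mpr
      calc Real.log sstar * (1 - α) ≤ |Real.log sstar * (1 - α)| := le_abs_self _
        _ = |Real.log sstar| * |1 - α| := abs_mul _ _
        _ ≤ |Real.log sstar| * 1 := by
            apply mul_le_mul_of_nonneg_left _ (abs_nonneg _)
            rw [abs_le]
            constructor <;> linarith
        _ = |Real.log sstar| := mul_one _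
    rw [hχeq, hRrpow, hdiff]
    have hEnn : 0 ≤ E α := le_of_lt (hEpos α)
    have h9 : α * ξ ^ (α - 1) * E α
        ≤ α * Real.exp |Real.log wstar| * (Wtot * (Real.exp δ * Real.exp (-δ/α))) := by
      have hξnn : 0 ≤ ξ ^ (α - 1) := Real.rpow_nonneg (le_of_lt hξpos) _
      apply mul_le_mul
      · exact mul_le_mul_of_nonneg_left hξbound (le_of_lt hα0)
      · exact hEbound
      · exact hEnn
      · exact mul_nonneg (le_of_lt hα0) (Real.exp_nonneg _)
    calc Real.exp (Real.log sstar * (1 - α)) * (α * ξ ^ (α - 1) * E α)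
        ≤ Real.exp |Real.log sstar|
          * (α * Real.exp |Real.log wstar| * (Wtot * (Real.exp δ * Real.exp (-δ/α)))) := by
          have hξnn : 0 ≤ ξ ^ (α - 1) := Real.rpow_nonneg (le_of_lt hξpos) _
          apply mul_le_mul hPbound h9
            (mul_nonneg (mul_nonneg (le_of_lt hα0) hξnn) hEnn) (Real.exp_nonneg _)
      _ = K * α * Real.exp (-δ/α) := by rw [hKdef]; ring
  -- ## order-of-vanishing contradiction
  rcases eq_or_ne (analyticOrderAt χ 0) ⊤ with htop | hfin
  · have hev := analyticOrderAt_eq_top.mp htop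
    obtain ⟨ε, hε, hball⟩ := Metric.eventually_nhds_iff.mp hev
    set α₀ : ℝ := min (ε/2) (1/2) with hα₀def
    have hα₀pos : 0 < α₀ := lt_min (by linarith) (by norm_num)
    have hα₀ : α₀ ∈ Set.Ioo (0:ℝ) 1 :=
      ⟨hα₀pos, lt_of_le_of_lt (min_le_right _ _) (by norm_num)⟩
    have hzero : χ α₀ = 0 := by
      apply hball
      rw [Real.dist_eq, sub_zero, abs_of_pos hα₀pos]
      calc α₀ ≤ ε/2 := min_le_left _ _
        _ < ε := by linarith
    have := (hbound α₀ hα₀).1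
    rw [hzero] at this
    exact lt_irrefl 0 this
  · lift analyticOrderAt χ 0 to ℕ using hfin with nn hnn
    obtain ⟨g, hgan, hg0, hgev⟩ := hχan.analyticOrderAt_eq_natCast.mp hnn.symm
    have hghalf : ∀ᶠ t in 𝓝 (0:ℝ), |g 0| / 2 ≤ |g t| := by
      have hcont : ContinuousAt g 0 := hgan.continuousAt
      have h2 : ∀ᶠ t in 𝓝 (0:ℝ), dist (g t) (g 0) < |g 0| / 2 :=
        hcont.tendsto (Metric.ball_mem_nhds _ (half_pos (abs_pos.mpr hg0)))
      filter_upwards [h2] with t ht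
      have h3 : |g t - g 0| < |g 0| / 2 := by rwa [Real.dist_eq] at ht
      have h4 := abs_sub_abs_le_abs_sub (g 0) (g t)
      rw [abs_sub_comm (g 0) (g t)] at h4
      linarith
    have htend := NCS_tendsto_aux K δ hδpos nn
    have hsmall : ∀ᶠ α in 𝓝[>] (0:ℝ),
        K * α * Real.exp (-δ/α) / α ^ nn < |g 0| / 2 := by
      exact htend.eventually_lt_const (half_pos (abs_pos.mpr hg0))
    have hev2 : ∀ᶠ α in 𝓝[>] (0:ℝ), χ α = α ^ nn * g α := by
      apply Filter.Eventually.filter_mono nhdsWithin_le_nhds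
      filter_upwards [hgev] with t ht
      simpa using ht
    have hev3 : ∀ᶠ α in 𝓝[>] (0:ℝ), |g 0| / 2 ≤ |g α| :=
      Filter.Eventually.filter_mono nhdsWithin_le_nhds hghalf
    have hev4 : ∀ᶠ α in 𝓝[>] (0:ℝ), α ∈ Set.Ioo (0:ℝ) 1 :=
      Ioo_mem_nhdsGT_of_mem (by norm_num : (0:ℝ) ∈ Set.Ico (0:ℝ) 1)
    obtain ⟨α, h2, h3rest⟩ := (hev2.and (hev3.and (hev4.and hsmall))).exists
    obtain ⟨h3, h4, h5⟩ := h3rest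
    obtain ⟨hχpos, hχle⟩ := hbound α h4
    have hαpos : 0 < α := h4.1
    have hpow : (0:ℝ) < α ^ nn := pow_pos hαpos nn
    have hgpos : 0 < g α := by
      rcases lt_trichotomy (g α) 0 with h | h | h
      · exfalso
        have : χ α < 0 := by rw [h2]; exact mul_neg_of_pos_of_neg hpow h
        linarith
      · exfalso
        rw [h2, h, mul_zero] at hχpos
        exact lt_irrefl 0 hχpos
      · exact h
    have h6 : |g α| = g α := abs_of_pos hgpos
    have h7 : g α ≤ K * α * Real.exp (-δ/α) / α ^ nn := by
      rw [le_div_iff₀ hpow]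
      have h8 : α ^ nn * g α ≤ K * α * Real.exp (-δ/α) := by rw [← h2]; exact hχle
      linarith
    rw [h6] at h3
    linarith
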